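/- arXiv:2204.04147 — 3 statements merged into one kernel-verified Lean document; each statement's English description precedes it below -/
import Mathlib

section
/- Let $0 < \delta < 1$ and $G_\delta'(s) = 1/\delta$ for $s < \delta$, $G_\delta'(s) = 1/s$ for $s \geq \delta$. Then for all $s, t \in \mathbb{R}$, $-(s - t)\big(G_\delta'(s) - G_\delta'(t)\big) \geq \delta^2 \big(G_\delta'(s) - G_\delta'(t)\big)^2$. -/
theorem reg_log_strong_monotone (δ : ℝ) (hδ0 : 0 < δ) (hδ1 : δ < 1)
    (G' : ℝ → ℝ)
    (hG' : ∀ s, G' s = if s < δ then 1 / δ else 1 / s) :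
    ∀ s t : ℝ, δ ^ 2 * (G' s - G' t) ^ 2 ≤ -((s - t) * (G' s - G' t)) := by
  intro s t
  rw [hG' s, hG' t]
  by_cases hs : s < δ <;> by_cases ht : t < δ
  · rw [if_pos hs, if_pos ht]; simp
  · rw [if_pos hs, if_neg ht]
    push_neg at ht
    have ht0 : 0 < t := lt_of_lt_of_le hδ0 ht
    rw [← sub_nonneg]
    have key : -((s - t) * (1 / δ - 1 / t)) - δ ^ 2 * (1 / δ - 1 / t) ^ 2
        = ((t - s) * (t - δ) * (δ * t) - δ ^ 2 * (t - δ) ^ 2) / (δ * t) ^ 2 := by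
      field_simp
      ring
    rw [key]
    apply div_nonneg _ (by positivity)
    have h1 : 0 ≤ (t - s) * t - (t - δ) * δ := by
      nlinarith [sq_nonneg (t - δ), mul_nonneg (sub_nonneg.2 hs.le) ht0.le]
    nlinarith [mul_nonneg (mul_nonneg hδ0.le (sub_nonneg.2 ht)) h1]
  · rw [if_neg hs, if_pos ht]
    push_neg at hs
    have hs0 : 0 < s := lt_of_lt_of_le hδ0 hs
    rw [← sub_nonneg]
    have key : -((s - t) * (1 / s - 1 / δ)) - δ ^ 2 * (1 / s - 1 / δ) ^ 2
        = ((s - t) * (s - δ) * (δ * s) - δ ^ 2 * (s - δ) ^ 2) / (δ * s) ^ 2 := by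
      field_simp
      ring
    rw [key]
    apply div_nonneg _ (by positivity)
    have h1 : 0 ≤ (s - t) * s - (s - δ) * δ := by
      nlinarith [sq_nonneg (s - δ), mul_nonneg (sub_nonneg.2 ht.le) hs0.le]
    nlinarith [mul_nonneg (mul_nonneg hδ0.le (sub_nonneg.2 hs)) h1]
  · rw [if_neg hs, if_neg ht]
    push_neg at hs ht
    have hs0 : 0 < s := lt_of_lt_of_le hδ0 hs
    have ht0 : 0 < t := lt_of_lt_of_le hδ0 ht
    rw [← sub_nonneg]
    have key : -((s - t) * (1 / s - 1 / t)) - δ ^ 2 * (1 / s - 1 / t) ^ 2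
        = ((s - t) ^ 2 * (s * t) - δ ^ 2 * (t - s) ^ 2) / (s * t) ^ 2 := by
      field_simp
      ring
    rw [key]
    apply div_nonneg _ (by positivity)
    have hst : δ ^ 2 ≤ s * t := by nlinarith
    nlinarith [sq_nonneg (t - s), mul_nonneg (sub_nonneg.2 hst) (sq_nonneg (t - s))]
end

section
/- Let $0 < \delta \leq 1/2$ and define $G_\delta(s) = s/\delta + \ln(\delta) - 1$ for $s < \delta$ and $G_\delta(s) = \ln(s)$ for $s \geq \delta$. Then for all $s \in \mathbb{R}$, $s - G_\delta(s) \geq \tfrac{1}{2}|s|$. -/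
theorem reg_log_coercive (δ : ℝ) (hδ0 : 0 < δ) (hδ1 : δ ≤ 1 / 2)
    (G : ℝ → ℝ)
    (hG : ∀ s, G s = if s < δ then s / δ + Real.log δ - 1 else Real.log s) :
    ∀ s : ℝ, (1 / 2) * |s| ≤ s - G s := by
  intro s
  rw [hG]
  by_cases h : s < δ
  · simp only [if_pos h]
    have hlog : Real.log δ ≤ 0 := Real.log_nonpos hδ0.le (by linarith)
    rcases abs_cases s with ⟨ha, hs⟩ | ⟨ha, hs⟩
    · rw [ha]
      have h1 : s / δ < 1 := (div_lt_one hδ0).mpr h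
      linarith
    · rw [ha]
      have h2 : s / δ ≤ 2 * s := by
        rw [div_le_iff₀ hδ0]
        nlinarith
      linarith
  · simp only [if_neg h]
    have hs0 : 0 < s := lt_of_lt_of_le hδ0 (not_lt.mp h)
    have e1 : s / 4 + 1 ≤ Real.exp (s / 4) := Real.add_one_le_exp _
    have e2 : s ≤ Real.exp (s / 4) ^ 2 := by
      nlinarith [Real.exp_pos (s / 4), sq_nonneg (s / 4 - 1)]
    have e3 : Real.exp (s / 4) ^ 2 = Real.exp (s / 2) := by
      rw [sq, ← Real.exp_add]
      ring_nf
    have hls : Real.log s ≤ s / 2 := by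
      rw [← Real.log_exp (s / 2)]
      exact Real.log_le_log hs0 (e3 ▸ e2)
    rw [abs_of_pos hs0]
    linarith
end

section
/- Let $0 < \delta \leq 1/2$ and define $G_\delta(s) = s/\delta + \ln(\delta) - 1$ for $s < \delta$ and $G_\delta(s) = \ln(s)$ for $s \geq \delta$. Then for all $s \in \mathbb{R}$, $s - G_\delta(s) \geq \tfrac{1}{2\delta}\, |\min\{s, 0\}|$. -/
theorem reg_log_negative_part (δ : ℝ) (hδ0 : 0 < δ) (hδ1 : δ ≤ 1 / 2)
    (G : ℝ → ℝ)
    (hG : ∀ s, G s = if s < δ then s / δ + Real.log δ - 1 else Real.log s) :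
    ∀ s : ℝ, (1 / (2 * δ)) * |min s 0| ≤ s - G s := by
  intro s
  rw [hG]
  have hlog : Real.log δ ≤ 0 := Real.log_nonpos hδ0.le (by linarith)
  by_cases h : s < δ
  · rw [if_pos h]
    by_cases hs : s ≤ 0
    · rw [min_eq_left hs, abs_of_nonpos hs]
      have key : s - (s / δ + Real.log δ - 1) - 1 / (2 * δ) * (-s)
          = s * (1 - 1 / (2 * δ)) - Real.log δ + 1 := by
        field_simp
        ring
      have h1 : 0 ≤ s * (1 - 1 / (2 * δ)) := by
        have h2 : 1 ≤ 1 / (2 * δ) := by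
          rw [le_div_iff₀ (by linarith)]
          linarith
        nlinarith
      linarith
    · push_neg at hs
      rw [min_eq_right hs.le, abs_zero]
      have h2 : s * (1 / δ - 1) ≤ δ * (1 / δ - 1) := by
        apply mul_le_mul_of_nonneg_right h.le
        have : 1 ≤ 1 / δ := by
          rw [le_div_iff₀ hδ0]; linarith
        linarith
      have h3 : δ * (1 / δ - 1) = 1 - δ := by field_simp
      have h4 : s * (1 / δ - 1) = s / δ - s := by ring
      linarith
  · push_neg at h
    have hs0 : (0:ℝ) ≤ s := le_trans hδ0.le h
    rw [if_neg (not_lt.mpr h), min_eq_right hs0, abs_zero]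
    have := Real.log_le_sub_one_of_pos (lt_of_lt_of_le hδ0 h)
    linarith
end
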